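/- Let (Ω, 𝓕, μ) be a probability space, let α : Ω → Matrix (Fin r) (Fin n) ℝ be measurable, and let S = { ω ↦ β(ω) ⬝ α(ω) : β : Ω → ℝ^r bounded measurable } ⊆ L^0(Ω; ℝ^n). Then the closure of S under convergence in measure equals { γ ∈ L^0(Ω; ℝ^n) : γ(ω) belongs to the row span of α(ω) for μ-a.e. ω }. -/

import Mathlib

open MeasureTheory Filter Matrix Topology

/-- The regularized Gram matrix `A Aᵀ + ε I`. -/
noncomputable def regM (r n : ℕ) (A : Matrix (Fin r) (Fin n) ℝ) (ε : ℝ) :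
    Matrix (Fin r) (Fin r) ℝ :=
  A * Aᵀ + ε • (1 : Matrix (Fin r) (Fin r) ℝ)

/-- The Tikhonov-regularized least-squares solution `γ Aᵀ (A Aᵀ + ε I)⁻¹` (written with
the adjugate, to ease measurability arguments). -/
noncomputable def regSol (r n : ℕ) (A : Matrix (Fin r) (Fin n) ℝ) (γ : Fin n → ℝ) (ε : ℝ) :
    Fin r → ℝ :=
  ((regM r n A ε).det)⁻¹ • ((regM r n A ε).adjugate *ᵥ (A *ᵥ γ))

/-- The regularized solution, truncated to `0` when its squared norm exceeds `k`. -/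
noncomputable def truncSol (r n : ℕ) (A : Matrix (Fin r) (Fin n) ℝ) (γ : Fin n → ℝ) (k : ℕ) :
    Fin r → ℝ :=
  if regSol r n A γ (1 / ((k : ℝ) + 1)) ⬝ᵥ regSol r n A γ (1 / ((k : ℝ) + 1)) ≤ (k : ℝ) then
    regSol r n A γ (1 / ((k : ℝ) + 1))
  else 0

lemma dot_self_nonneg' {m : ℕ} (v : Fin m → ℝ) : 0 ≤ v ⬝ᵥ v :=
  Finset.sum_nonneg fun _ _ => mul_self_nonneg _

lemma regM_det_ne_zero {r n : ℕ} (A : Matrix (Fin r) (Fin n) ℝ) {ε : ℝ} (hε : 0 < ε) :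
    (regM r n A ε).det ≠ 0 := by
  intro h
  obtain ⟨v, hv, hMv⟩ := Matrix.exists_mulVec_eq_zero_iff.2 h
  have h1 : v ⬝ᵥ (regM r n A ε *ᵥ v) = 0 := by rw [hMv, dotProduct_zero]
  have h2 : v ⬝ᵥ (regM r n A ε *ᵥ v) = (v ᵥ* A) ⬝ᵥ (v ᵥ* A) + ε * (v ⬝ᵥ v) := by
    rw [regM, add_mulVec, smul_mulVec, one_mulVec, ← Matrix.mulVec_mulVec,
      dotProduct_add, dotProduct_mulVec, mulVec_transpose, dotProduct_smul, smul_eq_mul]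
  have h3 : 0 < v ⬝ᵥ v :=
    lt_of_le_of_ne (dot_self_nonneg' v) (fun h' => hv (dotProduct_self_eq_zero.1 h'.symm))
  nlinarith [dot_self_nonneg' (v ᵥ* A)]

lemma regM_mulVec_regSol {r n : ℕ} (A : Matrix (Fin r) (Fin n) ℝ) (γ : Fin n → ℝ) {ε : ℝ}
    (hε : 0 < ε) : regM r n A ε *ᵥ regSol r n A γ ε = A *ᵥ γ := by
  have hd := regM_det_ne_zero A hε
  rw [regSol, mulVec_smul, Matrix.mulVec_mulVec, Matrix.mul_adjugate, smul_mulVec,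
    one_mulVec, smul_smul, inv_mul_cancel₀ hd, one_smul]

/-- The fundamental variational estimate: if `γ = c ᵥ* A` is solvable then the regularized
solution `β` satisfies `‖β ᵥ* A - γ‖² + ε ‖β‖² ≤ ε ‖c‖²`. -/
lemma regSol_bound {r n : ℕ} (A : Matrix (Fin r) (Fin n) ℝ) (γ : Fin n → ℝ) {ε : ℝ}
    (hε : 0 < ε) (c : Fin r → ℝ) (hc : c ᵥ* A = γ) :
    (regSol r n A γ ε ᵥ* A - γ) ⬝ᵥ (regSol r n A γ ε ᵥ* A - γ)
      + ε * (regSol r n A γ ε ⬝ᵥ regSol r n A γ ε) ≤ ε * (c ⬝ᵥ c) := by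
  set β := regSol r n A γ ε with hβ
  set e := β ᵥ* A - γ with he
  set δ := c - β with hδ
  have hne : regM r n A ε *ᵥ β = A *ᵥ γ := regM_mulVec_regSol A γ hε
  have hkey : A *ᵥ e + ε • β = 0 := by
    have h1 : A *ᵥ (β ᵥ* A) = (A * Aᵀ) *ᵥ β := by
      rw [← mulVec_transpose, Matrix.mulVec_mulVec]
    have h2 : (A * Aᵀ) *ᵥ β + ε • β = A *ᵥ γ := by
      rw [← hne, regM, add_mulVec, smul_mulVec, one_mulVec]
    have h3 : A *ᵥ e + ε • β = ((A * Aᵀ) *ᵥ β + ε • β) - A *ᵥ γ := by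
      rw [he, mulVec_sub, h1]; abel
    rw [h3, h2, sub_self]
  have hcross : ε * (δ ⬝ᵥ β) = e ⬝ᵥ e := by
    have h0 : δ ⬝ᵥ (A *ᵥ e + ε • β) = 0 := by rw [hkey, dotProduct_zero]
    have hδA : δ ᵥ* A = -e := by
      rw [hδ, Matrix.sub_vecMul, hc, he]; abel
    rw [dotProduct_add, dotProduct_mulVec, hδA, neg_dotProduct, dotProduct_smul,
      smul_eq_mul] at h0
    linarith
  have hexp : c ⬝ᵥ c = β ⬝ᵥ β + 2 * (δ ⬝ᵥ β) + δ ⬝ᵥ δ := by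
    have hcb : c = β + δ := by rw [hδ]; abel
    rw [hcb, add_dotProduct, dotProduct_add, dotProduct_add, dotProduct_comm β δ]
    ring
  nlinarith [dot_self_nonneg' e, dot_self_nonneg' δ, dot_self_nonneg' β]

lemma measurable_det' {Ω : Type*} [MeasurableSpace Ω] {m : ℕ}
    {N : Ω → Matrix (Fin m) (Fin m) ℝ} (h : ∀ i j, Measurable fun ω => N ω i j) :
    Measurable fun ω => (N ω).det := by
  simp_rw [Matrix.det_apply']
  exact Finset.measurable_sum _ fun σ _ =>
    (Finset.measurable_prod _ fun i _ => h _ _).const_mul _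

lemma measurable_adjugate' {Ω : Type*} [MeasurableSpace Ω] {m : ℕ}
    {N : Ω → Matrix (Fin m) (Fin m) ℝ} (h : ∀ i j, Measurable fun ω => N ω i j) (i j : Fin m) :
    Measurable fun ω => (N ω).adjugate i j := by
  simp_rw [Matrix.adjugate_apply]
  refine measurable_det' fun i' j' => ?_
  simp_rw [Matrix.updateRow_apply]
  split_ifs
  · exact measurable_const
  · exact h _ _

lemma measurable_regSol {Ω : Type*} [MeasurableSpace Ω] {r n : ℕ}
    {α : Ω → Matrix (Fin r) (Fin n) ℝ} (hα : ∀ i j, Measurable fun ω => α ω i j)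
    {γ : Ω → Fin n → ℝ} (hγ : Measurable γ) (ε : ℝ) :
    Measurable fun ω => regSol r n (α ω) (γ ω) ε := by
  have hγc : ∀ k, Measurable fun ω => γ ω k := fun k => (measurable_pi_apply k).comp hγ
  have hM : ∀ i j, Measurable fun ω => regM r n (α ω) ε i j := by
    intro i j
    have : (fun ω => regM r n (α ω) ε i j)
        = fun ω => (∑ k, α ω i k * α ω j k) + ε * (1 : Matrix (Fin r) (Fin r) ℝ) i j := by
      funext ω
      simp [regM, Matrix.mul_apply, Matrix.add_apply, Matrix.smul_apply,
        Matrix.transpose_apply, smul_eq_mul]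
    rw [this]
    exact (Finset.measurable_sum _ fun k _ => (hα i k).mul (hα j k)).add measurable_const
  have hAγ : ∀ j, Measurable fun ω => (α ω *ᵥ γ ω) j := by
    intro j
    simp_rw [Matrix.mulVec, dotProduct]
    exact Finset.measurable_sum _ fun k _ => (hα j k).mul (hγc k)
  refine measurable_pi_lambda _ fun i => ?_
  have : (fun ω => regSol r n (α ω) (γ ω) ε i)
      = fun ω => ((regM r n (α ω) ε).det)⁻¹
          * ∑ j, (regM r n (α ω) ε).adjugate i j * (α ω *ᵥ γ ω) j := by
    funext ω
    simp only [regSol, Pi.smul_apply, smul_eq_mul, Matrix.mulVec, dotProduct]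
  rw [this]
  exact ((measurable_det' hM).inv).mul
    (Finset.measurable_sum _ fun j _ => (measurable_adjugate' hM i j).mul (hAγ j))

lemma measurable_dot_self {Ω : Type*} [MeasurableSpace Ω] {m : ℕ}
    {f : Ω → Fin m → ℝ} (hf : Measurable f) : Measurable fun ω => f ω ⬝ᵥ f ω := by
  simp_rw [dotProduct]
  exact Finset.measurable_sum _ fun i _ =>
    ((measurable_pi_apply i).comp hf).mul ((measurable_pi_apply i).comp hf)

lemma measurable_truncSol {Ω : Type*} [MeasurableSpace Ω] {r n : ℕ}
    {α : Ω → Matrix (Fin r) (Fin n) ℝ} (hα : ∀ i j, Measurable fun ω => α ω i j)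
    {γ : Ω → Fin n → ℝ} (hγ : Measurable γ) (k : ℕ) :
    Measurable fun ω => truncSol r n (α ω) (γ ω) k := by
  have hb := measurable_regSol hα hγ (1 / ((k : ℝ) + 1))
  unfold truncSol
  exact Measurable.ite (measurableSet_le (measurable_dot_self hb) measurable_const)
    hb measurable_const

theorem stmt_3 {Ω : Type*} [MeasurableSpace Ω] (μ : Measure Ω) [IsProbabilityMeasure μ]
    (r n : ℕ) (α : Ω → Matrix (Fin r) (Fin n) ℝ)
    (hα : ∀ i j, Measurable fun ω => α ω i j) :
    { γ : Ω → (Fin n → ℝ) | Measurable γ ∧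
        ∃ β : ℕ → Ω → (Fin r → ℝ), (∀ k, Measurable (β k)) ∧
          (∀ k, ∃ C : ℝ, ∀ ω i, |β k ω i| ≤ C) ∧
          TendstoInMeasure μ (fun k ω => Matrix.vecMul (β k ω) (α ω)) atTop γ } =
      { γ : Ω → (Fin n → ℝ) | Measurable γ ∧
        ∀ᵐ ω ∂μ, γ ω ∈ Submodule.span ℝ (Set.range fun i => α ω i) } := by
  ext γ
  simp only [Set.mem_setOf_eq]
  constructor
  · rintro ⟨hγ, β, hβmeas, hβbdd, htend⟩
    refine ⟨hγ, ?_⟩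
    obtain ⟨ns, -, hae⟩ := htend.exists_seq_tendsto_ae
    filter_upwards [hae] with ω hω
    have hclosed : IsClosed ((Submodule.span ℝ (Set.range fun i => α ω i) :
        Submodule ℝ (Fin n → ℝ)) : Set (Fin n → ℝ)) :=
      Submodule.closed_of_finiteDimensional _
    refine hclosed.mem_of_tendsto hω (Filter.Eventually.of_forall fun k => ?_)
    show Matrix.vecMul (β (ns k) ω) (α ω)
      ∈ (Submodule.span ℝ (Set.range fun i => α ω i) : Submodule ℝ (Fin n → ℝ))
    rw [show (Set.range fun i => α ω i) = Set.range (α ω).row from rfl,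
      ← range_vecMulLinear (α ω)]
    exact ⟨β (ns k) ω, rfl⟩
  · rintro ⟨hγ, hspan⟩
    refine ⟨hγ, fun k ω => truncSol r n (α ω) (γ ω) k, fun k => measurable_truncSol hα hγ k,
      ?_, ?_⟩
    · intro k
      refine ⟨Real.sqrt k, fun ω i => ?_⟩
      unfold truncSol
      dsimp only
      split_ifs with h
      · refine Real.abs_le_sqrt ?_
        rw [sq]
        exact le_trans (Finset.single_le_sum
          (f := fun j => regSol r n (α ω) (γ ω) (1 / ((k : ℝ) + 1)) j
            * regSol r n (α ω) (γ ω) (1 / ((k : ℝ) + 1)) j)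
          (fun j _ => mul_self_nonneg _) (Finset.mem_univ i)) h
      · simp only [abs_zero, Pi.zero_apply]
        exact Real.sqrt_nonneg (k : ℝ)
    · apply tendstoInMeasure_of_tendsto_ae
      · intro k
        refine Measurable.aestronglyMeasurable (measurable_pi_lambda _ fun j => ?_)
        have : (fun ω => Matrix.vecMul (truncSol r n (α ω) (γ ω) k) (α ω) j)
            = fun ω => ∑ i, truncSol r n (α ω) (γ ω) k i * α ω i j := by
          funext ω; simp [Matrix.vecMul, dotProduct]
        rw [this]
        exact Finset.measurable_sum _ fun i _ =>
          ((measurable_pi_apply i).comp (measurable_truncSol hα hγ k)).mul (hα i j)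
      · filter_upwards [hspan] with ω hω
        obtain ⟨c, hc⟩ : ∃ c : Fin r → ℝ, c ᵥ* α ω = γ ω := by
          rw [show (Set.range fun i => α ω i) = Set.range (α ω).row from rfl,
            ← range_vecMulLinear (α ω)] at hω
          obtain ⟨c, hc⟩ := hω
          exact ⟨c, hc⟩
        have hεk : ∀ k : ℕ, (0 : ℝ) < 1 / ((k : ℝ) + 1) := fun k => by positivity
        have hkey := fun k : ℕ => regSol_bound (α ω) (γ ω) (hεk k) c hc
        have hbb : ∀ k : ℕ, regSol r n (α ω) (γ ω) (1 / ((k : ℝ) + 1))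
            ⬝ᵥ regSol r n (α ω) (γ ω) (1 / ((k : ℝ) + 1)) ≤ c ⬝ᵥ c := by
          intro k
          have h1 := hkey k
          have h2 := dot_self_nonneg'
            (regSol r n (α ω) (γ ω) (1 / ((k : ℝ) + 1)) ᵥ* α ω - γ ω)
          have h3 := hεk k
          nlinarith
        obtain ⟨k0, hk0⟩ := exists_nat_ge (c ⬝ᵥ c)
        have hev : (fun k : ℕ => Matrix.vecMul (regSol r n (α ω) (γ ω) (1 / ((k : ℝ) + 1)))
              (α ω)) =ᶠ[atTop]
            fun k => Matrix.vecMul (truncSol r n (α ω) (γ ω) k) (α ω) := by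
          rw [eventuallyEq_iff_exists_mem]
          refine ⟨Set.Ici k0, Filter.mem_atTop k0, fun k hk => ?_⟩
          dsimp only
          unfold truncSol
          rw [if_pos (le_trans (hbb k) (le_trans hk0 (Nat.cast_le.2 hk)))]
        refine Filter.Tendsto.congr' hev ?_
        rw [tendsto_pi_nhds]
        intro j
        have hsq : Tendsto (fun k : ℕ => Real.sqrt (1 / ((k : ℝ) + 1) * (c ⬝ᵥ c)))
            atTop (𝓝 0) := by
          have h0 : Tendsto (fun k : ℕ => 1 / ((k : ℝ) + 1) * (c ⬝ᵥ c)) atTop (𝓝 0) := by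
            simpa using tendsto_one_div_add_atTop_nhds_zero_nat.mul_const (c ⬝ᵥ c)
          have := (Real.continuous_sqrt.tendsto 0).comp h0
          simpa [Function.comp_def] using this
        rw [tendsto_iff_dist_tendsto_zero]
        simp_rw [Real.dist_eq]
        refine squeeze_zero (fun k => abs_nonneg _) (fun k => ?_) hsq
        have h1 : ((regSol r n (α ω) (γ ω) (1 / ((k : ℝ) + 1)) ᵥ* α ω - γ ω) j) ^ 2
            ≤ (regSol r n (α ω) (γ ω) (1 / ((k : ℝ) + 1)) ᵥ* α ω - γ ω)
              ⬝ᵥ (regSol r n (α ω) (γ ω) (1 / ((k : ℝ) + 1)) ᵥ* α ω - γ ω) := by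
          rw [sq]
          exact Finset.single_le_sum
            (f := fun j' => (regSol r n (α ω) (γ ω) (1 / ((k : ℝ) + 1)) ᵥ* α ω - γ ω) j'
              * (regSol r n (α ω) (γ ω) (1 / ((k : ℝ) + 1)) ᵥ* α ω - γ ω) j')
            (fun j' _ => mul_self_nonneg _) (Finset.mem_univ j)
        have h2 : (regSol r n (α ω) (γ ω) (1 / ((k : ℝ) + 1)) ᵥ* α ω - γ ω)
              ⬝ᵥ (regSol r n (α ω) (γ ω) (1 / ((k : ℝ) + 1)) ᵥ* α ω - γ ω)
            ≤ 1 / ((k : ℝ) + 1) * (c ⬝ᵥ c) := by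
          have h4 := hkey k
          have h5 := dot_self_nonneg' (regSol r n (α ω) (γ ω) (1 / ((k : ℝ) + 1)))
          have h3 := hεk k
          nlinarith
        have := Real.abs_le_sqrt (le_trans h1 h2)
        simpa [Pi.sub_apply] using this
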